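/- Let r ≥ 2 be an integer. For every real x > r, LL_r is differentiable at C(x,r) and 1/LL_r'(C(x,r)) = (1/r)·(x − r + 1 + 1/(1/x + 1/(x−1) + ⋯ + 1/(x−r+2))). -/

import Mathlib

/-- The generalized binomial coefficient `C(x, r) = x (x-1) ⋯ (x-r+1) / r!` for real `x`. -/
noncomputable def realChoose (x : ℝ) (r : ℕ) : ℝ :=
  (∏ i ∈ Finset.range r, (x - i)) / (Nat.factorial r : ℝ)

/-- The inverse on `[1, ∞)` of the increasing bijection `x ↦ C(x, r)` from `[r, ∞)` onto
`[1, ∞)`. -/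
noncomputable def invChoose (r : ℕ) (y : ℝ) : ℝ :=
  sSup {t : ℝ | (r : ℝ) ≤ t ∧ realChoose t r ≤ y}

/-- The function `LL_r`, defined by `LL_r(C(x, r)) = C(x, r-1)` for `x ≥ r`, and by
`LL_r(x) = r (x + ε (x - x²))` with `ε = 1/(1 + 1/2 + ⋯ + 1/r)` for `0 ≤ x ≤ 1`. -/
noncomputable def LLr (r : ℕ) (x : ℝ) : ℝ :=
  if 1 ≤ x then realChoose (invChoose r x) (r - 1)
  else (r : ℝ) * (x + (∑ i ∈ Finset.range r, (1 : ℝ) / (i + 1))⁻¹ * (x - x ^ 2))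

open Finset Filter Topology

private lemma hasStrictDerivAt_rc (k : ℕ) (x : ℝ) (hpos : ∀ i ∈ Finset.range k, x - (i:ℝ) ≠ 0) :
    HasStrictDerivAt (fun t => realChoose t k)
      (realChoose x k * ∑ i ∈ Finset.range k, 1 / (x - i)) x := by
  have h := HasStrictDerivAt.finset_prod (u := Finset.range k) (x := x)
    (f := fun (i : ℕ) (t : ℝ) => t - (i:ℝ)) (f' := fun _ => (1:ℝ))
    (fun i _ => (hasStrictDerivAt_id x).sub_const _)
  have hsum : ∑ i ∈ Finset.range k, (∏ j ∈ (Finset.range k).erase i, (x - (j:ℝ))) • (1:ℝ)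
      = (∏ i ∈ Finset.range k, (x - i)) * ∑ i ∈ Finset.range k, 1/(x - i) := by
    rw [Finset.mul_sum]
    refine Finset.sum_congr rfl fun i hi => ?_
    rw [smul_eq_mul, mul_one, ← Finset.mul_prod_erase _ _ hi]
    field_simp [hpos i hi]
  have h2 := h.div_const (Nat.factorial k : ℝ)
  simp only [smul_eq_mul, mul_one] at h2 hsum
  rw [hsum] at h2
  have heq : (∏ i ∈ Finset.range k, (x - i)) * (∑ i ∈ Finset.range k, 1/(x - i)) / (Nat.factorial k : ℝ)
      = realChoose x k * ∑ i ∈ Finset.range k, 1 / (x - i) := by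
    unfold realChoose; ring
  rw [heq] at h2
  have h3 : (fun x => (∏ i ∈ Finset.range k, fun t => t - (i:ℝ)) x / (Nat.factorial k : ℝ)) = fun t => realChoose t k := by
    funext t
    simp only [Finset.prod_apply]
    rfl
  rw [h3] at h2
  exact h2

private lemma rc_pos {k : ℕ} {x : ℝ} (h : ∀ i ∈ Finset.range k, (0:ℝ) < x - i) :
    0 < realChoose x k := by
  unfold realChoose
  apply div_pos (Finset.prod_pos h)
  exact_mod_cast Nat.factorial_pos k

private lemma rc_strictMonoOn (r : ℕ) (hr : 1 ≤ r) :
    StrictMonoOn (fun t => realChoose t r) (Set.Ici (r:ℝ)) := by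
  apply strictMonoOn_of_deriv_pos (convex_Ici _)
  · apply Continuous.continuousOn
    unfold realChoose
    fun_prop
  · intro t ht
    rw [interior_Ici] at ht
    have hpos : ∀ i ∈ Finset.range r, (0:ℝ) < t - i := by
      intro i hi
      have : (i:ℝ) < r := by exact_mod_cast Finset.mem_range.1 hi
      linarith [Set.mem_Ioi.1 ht]
    rw [(hasStrictDerivAt_rc r t (fun i hi => (hpos i hi).ne')).hasDerivAt.deriv]
    apply mul_pos (rc_pos hpos)
    apply Finset.sum_pos (fun i hi => by have := hpos i hi; positivity)
    exact Finset.nonempty_range_iff.2 (by omega)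

private lemma rc_self (r : ℕ) : realChoose (r:ℝ) r = 1 := by
  unfold realChoose
  rw [div_eq_one_iff_eq (by exact_mod_cast (Nat.factorial_pos r).ne')]
  have h1 : ∀ i ∈ Finset.range r, ((r:ℝ) - i) = ((r - i : ℕ) : ℝ) := fun i hi => by
    have := (Finset.mem_range.1 hi).le
    push_cast [Nat.cast_sub this]; ring
  rw [Finset.prod_congr rfl h1, ← Nat.cast_prod, Nat.cast_inj]
  have h2 : ∀ i ∈ Finset.range r, r - i = (r - 1 - i) + 1 := fun i hi => by
    have := Finset.mem_range.1 hi; omega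
  calc ∏ i ∈ Finset.range r, (r - i) = ∏ i ∈ Finset.range r, ((r - 1 - i) + 1) :=
        Finset.prod_congr rfl h2
    _ = ∏ i ∈ Finset.range r, (i + 1) := Finset.prod_range_reflect (fun j => j + 1) r
    _ = r.factorial := Finset.prod_range_add_one_eq_factorial r

private lemma invChoose_rc {r : ℕ} (hr : 1 ≤ r) {t : ℝ} (ht : (r:ℝ) ≤ t) :
    invChoose r (realChoose t r) = t := by
  have hmono := rc_strictMonoOn r hr
  have hub : ∀ s ∈ {s : ℝ | (r:ℝ) ≤ s ∧ realChoose s r ≤ realChoose t r}, s ≤ t := by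
    rintro s ⟨hs1, hs2⟩
    by_contra h
    push_neg at h
    exact absurd (hmono ht (le_trans ht h.le) h) (not_lt.2 hs2)
  refine le_antisymm (csSup_le ⟨t, ht, le_refl _⟩ hub) (le_csSup ⟨t, hub⟩ ⟨ht, le_refl _⟩)

theorem stmt7 (r : ℕ) (hr : 2 ≤ r) (x : ℝ) (hx : (r : ℝ) < x) :
    DifferentiableAt ℝ (LLr r) (realChoose x r) ∧
    1 / deriv (LLr r) (realChoose x r) =
      (1 / r) * (x - r + 1 + 1 / (∑ i ∈ Finset.range (r - 1), 1 / (x - i))) := by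
  have hr1 : 1 ≤ r := by omega
  have hxi : ∀ i ∈ Finset.range r, (0:ℝ) < x - i := by
    intro i hi
    have : (i:ℝ) < r := by exact_mod_cast Finset.mem_range.1 hi
    linarith
  have hxi' : ∀ i ∈ Finset.range (r-1), (0:ℝ) < x - i :=
    fun i hi => hxi i (Finset.mem_range.2 (by have := Finset.mem_range.1 hi; omega))
  set S : ℝ := ∑ i ∈ Finset.range (r - 1), 1 / (x - i) with hS
  have hSpos : 0 < S := by
    apply Finset.sum_pos (fun i hi => by have := hxi' i hi; positivity)
    exact Finset.nonempty_range_iff.2 (by omega)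
  set g0 : ℝ := realChoose x (r-1) with hg0
  have hg0pos : 0 < g0 := rc_pos hxi'
  set u : ℝ := x - ((r:ℝ) - 1) with hu
  have hupos : 0 < u := by simp only [hu]; linarith
  have hf := hasStrictDerivAt_rc r x (fun i hi => (hxi i hi).ne')
  have hg := hasStrictDerivAt_rc (r-1) x (fun i hi => (hxi' i hi).ne')
  -- relate realChoose x r and sums
  have hcast : ((r - 1 : ℕ) : ℝ) = (r:ℝ) - 1 := by push_cast [Nat.cast_sub hr1]; ring
  have hrsplit : (∑ i ∈ Finset.range r, 1 / (x - i)) = S + 1/u := by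
    have h1 : Finset.range r = Finset.range ((r-1)+1) := by congr 1; omega
    rw [hS, hu, h1, Finset.sum_range_succ, hcast]
  have hfsplit : realChoose x r = g0 * u / r := by
    obtain ⟨m, hm⟩ : ∃ m, r = m + 1 := ⟨r - 1, by omega⟩
    rw [hg0, hu]
    unfold realChoose
    subst hm
    simp only [Nat.add_sub_cancel, Finset.prod_range_succ, Nat.factorial_succ]
    have hm1 : ((Nat.factorial m : ℝ)) ≠ 0 := by exact_mod_cast (Nat.factorial_pos m).ne'
    have hm2 : ((m:ℝ) + 1) ≠ 0 := by positivity
    push_cast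
    field_simp
    ring
  set fd : ℝ := realChoose x r * ∑ i ∈ Finset.range r, 1 / (x - i) with hfd
  have hfdpos : 0 < fd := by
    rw [hfd, hfsplit, hrsplit]
    have : 0 < S + 1/u := by positivity
    positivity
  have hfdne : fd ≠ 0 := hfdpos.ne'
  set y₀ : ℝ := realChoose x r with hy₀
  set φ : ℝ → ℝ := hf.localInverse _ _ _ hfdne with hφdef
  have hφ : HasStrictDerivAt φ fd⁻¹ y₀ := hf.to_localInverse hfdne
  have hφx : φ y₀ = x := (hf.hasStrictFDerivAt_equiv hfdne).localInverse_apply_image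
  have hmono := rc_strictMonoOn r hr1
  have hy1 : 1 < y₀ := by
    rw [hy₀, ← rc_self r]
    exact hmono (Set.mem_Ici.2 le_rfl) (Set.mem_Ici.2 hx.le) hx
  -- eventual equality of LLr with realChoose (φ y) (r-1)
  have hEq : LLr r =ᶠ[𝓝 y₀] fun y => realChoose (φ y) (r-1) := by
    have h1 : ∀ᶠ y in 𝓝 y₀, 1 ≤ y :=
      Filter.eventually_of_mem (Ioi_mem_nhds hy1) (fun y hy => (Set.mem_Ioi.1 hy).le)
    have hcont : ContinuousAt φ y₀ := hφ.hasDerivAt.continuousAt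
    have h2 : ∀ᶠ y in 𝓝 y₀, (r:ℝ) < φ y := by
      apply hcont.eventually_mem (s := Set.Ioi (r:ℝ))
      rw [hφx]; exact Ioi_mem_nhds hx
    have h3 : ∀ᶠ y in 𝓝 y₀, realChoose (φ y) r = y :=
      (hf.hasStrictFDerivAt_equiv hfdne).eventually_right_inverse
    filter_upwards [h1, h2, h3] with y hy1' hy2 hy3
    have h4 : invChoose r y = φ y := by
      conv_lhs => rw [← hy3]
      exact invChoose_rc hr1 hy2.le
    rw [LLr, if_pos hy1', h4]
  have hG : HasDerivAt (fun y => realChoose (φ y) (r-1))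
      ((g0 * S) * fd⁻¹) y₀ := by
    have hgx : HasDerivAt (fun t => realChoose t (r-1)) (g0 * S) (φ y₀) := by
      rw [hφx]; exact hg.hasDerivAt
    exact hgx.comp y₀ hφ.hasDerivAt
  have hdiff : DifferentiableAt ℝ (LLr r) y₀ :=
    (hEq.differentiableAt_iff).2 hG.differentiableAt
  refine ⟨hdiff, ?_⟩
  have hderiv : deriv (LLr r) y₀ = (g0 * S) * fd⁻¹ := by
    rw [hEq.deriv_eq, hG.deriv]
  rw [hderiv]
  rw [hfd, hfsplit, hrsplit]
  have hrne : (r:ℝ) ≠ 0 := by positivity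
  have : x - (r:ℝ) + 1 = u := by rw [hu]; ring
  rw [this]
  field_simp
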